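/- arXiv:1011.2952 — 2 statements merged into one kernel-verified Lean document; each statement's English description precedes it below -/
import Mathlib

section
/- Let W ⊆ ℝⁿ be an open neighborhood of 0, f : ℝⁿ → ℝⁿ continuously differentiable with f(0) = 0, and h : ℝⁿ → ℝᵖ continuous with h(0) = 0. Assume that for every x₀ ∈ W the initial value problem ẋ = f(x), x(0) = x₀ has a unique solution φ(·, x₀) : [0, ∞) → W that satisfies φ(t, x₀) → 0 as t → ∞ and for which t ↦ ‖h(φ(t, x₀))‖² is integrable on [0, ∞). Define the observability energy L_o(x₀) = ½ ∫₀^∞ ‖h(φ(t, x₀))‖² dt. If Λ : W → ℝ is continuously differentiable, Λ(0) = 0, and ⟨∇Λ(x), f(x)⟩ + ½‖h(x)‖² = 0 for all x ∈ W, then Λ(x₀) = L_o(x₀) for every x₀ ∈ W. In other words, L_o is the unique C¹ solution of this Hamilton–Jacobi equation on W vanishing at the origin. -/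
open MeasureTheory Filter RealInnerProductSpace

/-- Uniqueness of the observability-energy solution of the Hamilton–Jacobi equation:
if every initial state `x₀ ∈ W` gives rise to a unique solution `φ(·, x₀)` of `ẋ = f(x)`
staying in `W`, converging to `0`, and with integrable output energy, and if `Λ` is `C¹`
on `W` (with gradient `Λ'`), vanishes at `0`, and satisfies
`⟪∇Λ(x), f(x)⟫ + ½‖h(x)‖² = 0` on `W`, then `Λ` equals the observability energy
`L_o(x₀) = ½ ∫₀^∞ ‖h(φ(t, x₀))‖² dt` on `W`. -/
theorem hamilton_jacobi_observability_energy_unique {n p : ℕ}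
    (W : Set (EuclideanSpace ℝ (Fin n))) (hWopen : IsOpen W) (hW0 : (0 : _) ∈ W)
    (f : EuclideanSpace ℝ (Fin n) → EuclideanSpace ℝ (Fin n))
    (hf : ContDiff ℝ 1 f) (hf0 : f 0 = 0)
    (h : EuclideanSpace ℝ (Fin n) → EuclideanSpace ℝ (Fin p))
    (hh : Continuous h) (hh0 : h 0 = 0)
    (φ : ℝ → EuclideanSpace ℝ (Fin n) → EuclideanSpace ℝ (Fin n))
    (hφ0 : ∀ x₀ ∈ W, φ 0 x₀ = x₀)
    (hφW : ∀ x₀ ∈ W, ∀ t ≥ (0 : ℝ), φ t x₀ ∈ W)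
    (hφode : ∀ x₀ ∈ W, ∀ t ≥ (0 : ℝ), HasDerivAt (fun s => φ s x₀) (f (φ t x₀)) t)
    (hφlim : ∀ x₀ ∈ W, Tendsto (fun t => φ t x₀) atTop (nhds 0))
    (hφint : ∀ x₀ ∈ W, IntegrableOn (fun t => ‖h (φ t x₀)‖ ^ 2) (Set.Ioi (0 : ℝ)))
    (hφuniq : ∀ x₀ ∈ W, ∀ ψ : ℝ → EuclideanSpace ℝ (Fin n), ψ 0 = x₀ →
      (∀ t ≥ (0 : ℝ), ψ t ∈ W) → (∀ t ≥ (0 : ℝ), HasDerivAt ψ (f (ψ t)) t) →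
      ∀ t ≥ (0 : ℝ), ψ t = φ t x₀)
    (Λ : EuclideanSpace ℝ (Fin n) → ℝ)
    (Λ' : EuclideanSpace ℝ (Fin n) → EuclideanSpace ℝ (Fin n))
    (hΛgrad : ∀ x ∈ W, HasGradientAt Λ (Λ' x) x)
    (hΛ'cont : ContinuousOn Λ' W)
    (hΛ0 : Λ 0 = 0)
    (hHJ : ∀ x ∈ W, ⟪Λ' x, f x⟫ + (1 / 2 : ℝ) * ‖h x‖ ^ 2 = 0) :
    ∀ x₀ ∈ W, Λ x₀ = (1 / 2 : ℝ) * ∫ t in Set.Ioi (0 : ℝ), ‖h (φ t x₀)‖ ^ 2 := by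
  intro x₀ hx₀
  -- key fact: for every T ≥ 0, Λ x₀ = Λ (φ T x₀) + ½ ∫₀^T ‖h (φ t x₀)‖²
  have hcontφ : ContinuousOn (fun t => φ t x₀) (Set.Ici (0 : ℝ)) := by
    intro t ht
    exact ((hφode x₀ hx₀ t ht).continuousAt).continuousWithinAt
  have hderiv : ∀ t ≥ (0 : ℝ),
      HasDerivAt (fun s => Λ (φ s x₀)) (-((1 / 2 : ℝ) * ‖h (φ t x₀)‖ ^ 2)) t := by
    intro t ht
    have hx := hφW x₀ hx₀ t ht
    have h1 := ((hΛgrad _ hx).hasFDerivAt).comp_hasDerivAt t (hφode x₀ hx₀ t ht)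
    have h2 : InnerProductSpace.toDual ℝ _ (Λ' (φ t x₀)) (f (φ t x₀))
        = -((1 / 2 : ℝ) * ‖h (φ t x₀)‖ ^ 2) := by
      have := hHJ _ hx
      simp only [InnerProductSpace.toDual_apply_apply]
      linarith
    rw [h2] at h1
    exact h1
  have key : ∀ T ≥ (0 : ℝ),
      Λ x₀ = Λ (φ T x₀) + (1 / 2 : ℝ) * ∫ t in (0 : ℝ)..T, ‖h (φ t x₀)‖ ^ 2 := by
    intro T hT
    have huIcc : Set.uIcc (0 : ℝ) T = Set.Icc 0 T := Set.uIcc_of_le hT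
    have hftc := intervalIntegral.integral_eq_sub_of_hasDerivAt
      (f := fun s => Λ (φ s x₀))
      (f' := fun t => -((1 / 2 : ℝ) * ‖h (φ t x₀)‖ ^ 2))
      (a := 0) (b := T)
      (fun t ht => hderiv t (by rw [huIcc] at ht; exact ht.1))
      (by
        apply ContinuousOn.intervalIntegrable
        rw [huIcc]
        apply ContinuousOn.neg
        apply ContinuousOn.mul continuousOn_const
        exact ((hh.comp_continuousOn (hcontφ.mono Set.Icc_subset_Ici_self)).norm).pow 2)
    rw [intervalIntegral.integral_neg, intervalIntegral.integral_const_mul] at hftc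
    have h0 : φ 0 x₀ = x₀ := hφ0 x₀ hx₀
    simp only [h0] at hftc
    linarith
  -- take T → ∞
  have hΛcont : ContinuousAt Λ 0 := ((hΛgrad 0 hW0).hasFDerivAt).continuousAt
  have hlim1 : Tendsto (fun T => Λ (φ T x₀)) atTop (nhds 0) := by
    have := hΛcont.tendsto.comp (hφlim x₀ hx₀)
    rwa [hΛ0] at this
  have hlim2 : Tendsto (fun T => ∫ t in (0 : ℝ)..T, ‖h (φ t x₀)‖ ^ 2) atTop
      (nhds (∫ t in Set.Ioi (0 : ℝ), ‖h (φ t x₀)‖ ^ 2)) :=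
    intervalIntegral_tendsto_integral_Ioi 0 (hφint x₀ hx₀) tendsto_id
  have hlim : Tendsto
      (fun T => Λ (φ T x₀) + (1 / 2 : ℝ) * ∫ t in (0 : ℝ)..T, ‖h (φ t x₀)‖ ^ 2) atTop
      (nhds (0 + (1 / 2 : ℝ) * ∫ t in Set.Ioi (0 : ℝ), ‖h (φ t x₀)‖ ^ 2)) :=
    hlim1.add (hlim2.const_mul _)
  have hconst : Tendsto
      (fun T => Λ (φ T x₀) + (1 / 2 : ℝ) * ∫ t in (0 : ℝ)..T, ‖h (φ t x₀)‖ ^ 2) atTop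
      (nhds (Λ x₀)) := by
    have : ∀ᶠ T in atTop,
        Λ (φ T x₀) + (1 / 2 : ℝ) * ∫ t in (0 : ℝ)..T, ‖h (φ t x₀)‖ ^ 2 = Λ x₀ := by
      filter_upwards [eventually_ge_atTop (0 : ℝ)] with T hT using (key T hT).symm
    exact Tendsto.congr' (by filter_upwards [this] with T hT using hT.symm) tendsto_const_nhds
  have := tendsto_nhds_unique hconst hlim
  rw [this, zero_add]
end

section
/- Let F ∈ ℝ^{n×n} be Hurwitz, G ∈ ℝ^{n×m} with (F, G) controllable, and H ∈ ℝ^{p×n} with (F, H) observable, and let W_c = ∫₀^∞ exp(tF) G Gᵀ exp(tFᵀ) dt and W_o = ∫₀^∞ exp(tFᵀ) Hᵀ H exp(tF) dt. Then there exists an invertible matrix T ∈ ℝ^{n×n} and real numbers σ₁ ≥ σ₂ ≥ … ≥ σₙ > 0 such that T W_c Tᵀ = T^{-ᵀ} W_o T^{-1} = diag(σ₁, …, σₙ). That is, the transformed system (T F T^{-1}, T G, H T^{-1}) is balanced: its controllability and observability Gramians are equal and diagonal. -/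
open MeasureTheory Matrix

/-- A real square matrix is Hurwitz if every (complex) eigenvalue has negative real part. -/
def IsHurwitz {n : ℕ} (F : Matrix (Fin n) (Fin n) ℝ) : Prop :=
  ∀ μ ∈ spectrum ℂ (F.map (algebraMap ℝ ℂ)), μ.re < 0

/-- The controllability matrix `[G, FG, …, F^{n-1}G]` of the pair `(F, G)`. -/
def ctrbMatrix {n m : ℕ} (F : Matrix (Fin n) (Fin n) ℝ) (G : Matrix (Fin n) (Fin m) ℝ) :
    Matrix (Fin n) (Fin n × Fin m) ℝ :=
  Matrix.of fun i p => (F ^ (p.1 : ℕ) * G) i p.2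

/-- The pair `(F, G)` is controllable if the controllability matrix has full rank `n`. -/
def IsControllablePair {n m : ℕ} (F : Matrix (Fin n) (Fin n) ℝ)
    (G : Matrix (Fin n) (Fin m) ℝ) : Prop :=
  (ctrbMatrix F G).rank = n

/-- The pair `(F, H)` is observable if the unobservable subspace `∩_{k<n} ker (H Fᵏ)`
is trivial. -/
def IsObservablePair {n p : ℕ} (F : Matrix (Fin n) (Fin n) ℝ)
    (H : Matrix (Fin p) (Fin n) ℝ) : Prop :=
  ∀ x : Fin n → ℝ, (∀ k < n, (H * F ^ k) *ᵥ x = 0) → x = 0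

/-- The controllability Gramian `W_c = ∫₀^∞ exp(tF) G Gᵀ exp(tFᵀ) dt`, defined entrywise. -/
noncomputable def controllabilityGramian {n m : ℕ} (F : Matrix (Fin n) (Fin n) ℝ)
    (G : Matrix (Fin n) (Fin m) ℝ) : Matrix (Fin n) (Fin n) ℝ :=
  Matrix.of fun i j =>
    ∫ t in Set.Ioi (0 : ℝ), (NormedSpace.exp (t • F) * G * Gᵀ * NormedSpace.exp (t • Fᵀ)) i j

/-- The observability Gramian `W_o = ∫₀^∞ exp(tFᵀ) Hᵀ H exp(tF) dt`, defined entrywise. -/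
noncomputable def observabilityGramian {n p : ℕ} (F : Matrix (Fin n) (Fin n) ℝ)
    (H : Matrix (Fin p) (Fin n) ℝ) : Matrix (Fin n) (Fin n) ℝ :=
  Matrix.of fun i j =>
    ∫ t in Set.Ioi (0 : ℝ), (NormedSpace.exp (t • Fᵀ) * Hᵀ * H * NormedSpace.exp (t • F)) i j


open NormedSpace Finset

section AuxProofs

attribute [local instance] Matrix.linftyOpNormedAddCommGroup Matrix.linftyOpNormedRing
  Matrix.linftyOpNormedAlgebra

lemma aux_nilp_decay {n : ℕ} (B : Matrix (Fin n) (Fin n) ℂ) (μ : ℂ) (v : Fin n → ℂ) (k : ℕ)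
    (hv : ((B - μ • 1) ^ k) *ᵥ v = 0) (t : ℝ) (ht : 0 ≤ t) :
    ‖exp (t • B) *ᵥ v‖ ≤
      (∑ j ∈ range k, ‖((B - μ • 1) ^ j) *ᵥ v‖) * (1 + t) ^ k * Real.exp (t * μ.re) := by
  set N := B - μ • 1 with hN
  have hsplit : t • B = ((t : ℂ) * μ) • (1 : Matrix (Fin n) (Fin n) ℂ) + (t : ℂ) • N := by
    rw [← algebraMap_smul ℂ t B]
    rw [hN, smul_sub, ← smul_smul]
    simp [smul_smul]
  have hcomm : Commute (((t : ℂ) * μ) • (1 : Matrix (Fin n) (Fin n) ℂ)) ((t : ℂ) • N) :=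
    ((Commute.one_left _).smul_left _).smul_right _
  have hexp : exp (t • B) = Complex.exp ((t : ℂ) * μ) • exp ((t : ℂ) • N) := by
    rw [hsplit, Matrix.exp_add_of_commute _ _ hcomm]
    have h1 : (((t : ℂ) * μ) • (1 : Matrix (Fin n) (Fin n) ℂ)) =
        algebraMap ℂ (Matrix (Fin n) (Fin n) ℂ) ((t : ℂ) * μ) := by
      rw [Algebra.algebraMap_eq_smul_one]
    rw [h1]
    erw [← algebraMap_exp_comm]
    rw [Complex.exp_eq_exp_ℂ, Algebra.algebraMap_eq_smul_one,
      smul_mul_assoc, one_mul]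
  -- the linear map M ↦ M *ᵥ v
  let L0 : Matrix (Fin n) (Fin n) ℂ →ₗ[ℂ] (Fin n → ℂ) :=
    { toFun := fun M => M *ᵥ v
      map_add' := fun M₁ M₂ => Matrix.add_mulVec M₁ M₂ v
      map_smul' := fun c M => Matrix.smul_mulVec c M v }
  let L : Matrix (Fin n) (Fin n) ℂ →L[ℂ] (Fin n → ℂ) := L0.toContinuousLinearMap
  have hLsum : exp ((t : ℂ) • N) *ᵥ v =
      ∑' j : ℕ, (((Nat.factorial j) : ℂ)⁻¹ * (t : ℂ) ^ j) • (N ^ j *ᵥ v) := by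
    have : exp ((t : ℂ) • N) = ∑' j : ℕ, (((Nat.factorial j) : ℂ)⁻¹) • ((t : ℂ) • N) ^ j := by
      rw [exp_eq_tsum (𝕂 := ℂ)]
    calc exp ((t : ℂ) • N) *ᵥ v = L (exp ((t : ℂ) • N)) := rfl
      _ = ∑' j : ℕ, L ((((Nat.factorial j) : ℂ)⁻¹) • ((t : ℂ) • N) ^ j) := by
          rw [this, L.map_tsum (expSeries_summable' (𝕂 := ℂ) ((t : ℂ) • N))]
      _ = ∑' j : ℕ, (((Nat.factorial j) : ℂ)⁻¹ * (t : ℂ) ^ j) • (N ^ j *ᵥ v) := by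
          congr 1; funext j
          show (((Nat.factorial j) : ℂ)⁻¹ • ((t : ℂ) • N) ^ j) *ᵥ v = _
          rw [smul_pow, smul_mulVec, smul_mulVec, smul_smul]
  have hvanish : ∀ j : ℕ, j ∉ range k → (((Nat.factorial j) : ℂ)⁻¹ * (t : ℂ) ^ j) • (N ^ j *ᵥ v) = 0 := by
    intro j hj
    rw [mem_range, not_lt] at hj
    have : N ^ j *ᵥ v = 0 := by
      rw [← pow_sub_mul_pow N hj, ← Matrix.mulVec_mulVec, hv, Matrix.mulVec_zero]
    rw [this, smul_zero]
  have hfin : exp ((t : ℂ) • N) *ᵥ v =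
      ∑ j ∈ range k, (((Nat.factorial j) : ℂ)⁻¹ * (t : ℂ) ^ j) • (N ^ j *ᵥ v) := by
    rw [hLsum, tsum_eq_sum hvanish]
  have hbound : ‖exp ((t : ℂ) • N) *ᵥ v‖ ≤
      (∑ j ∈ range k, ‖(N ^ j) *ᵥ v‖) * (1 + t) ^ k := by
    rw [hfin]
    refine (norm_sum_le _ _).trans ?_
    rw [Finset.sum_mul]
    refine Finset.sum_le_sum fun j hj => ?_
    rw [norm_smul]
    have h1 : ‖((Nat.factorial j) : ℂ)⁻¹ * (t : ℂ) ^ j‖ ≤ (1 + t) ^ k := by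
      rw [norm_mul, norm_pow, norm_inv]
      have ht' : ‖(t : ℂ)‖ = t := by simp [Complex.norm_real, abs_of_nonneg ht]
      have hf : ‖((Nat.factorial j) : ℂ)‖ = ((Nat.factorial j) : ℝ) := by simp
      rw [ht', hf]
      have h2 : ((Nat.factorial j) : ℝ)⁻¹ ≤ 1 := by
        rw [inv_le_one_iff₀]; right; exact_mod_cast Nat.one_le_iff_ne_zero.2 (Nat.factorial_ne_zero j)
      have h3 : t ^ j ≤ (1 + t) ^ k := by
        calc t ^ j ≤ (1 + t) ^ j := pow_le_pow_left₀ ht (by linarith) j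
          _ ≤ (1 + t) ^ k := pow_le_pow_right₀ (by linarith) (mem_range.mp hj).le
      calc ((Nat.factorial j) : ℝ)⁻¹ * t ^ j ≤ 1 * (1 + t) ^ k := by
            exact mul_le_mul h2 h3 (pow_nonneg ht j) zero_le_one
        _ = (1 + t) ^ k := one_mul _
    calc ‖((Nat.factorial j) : ℂ)⁻¹ * (t : ℂ) ^ j‖ * ‖N ^ j *ᵥ v‖ ≤ (1 + t) ^ k * ‖N ^ j *ᵥ v‖ :=
          mul_le_mul_of_nonneg_right h1 (norm_nonneg _)
      _ = ‖N ^ j *ᵥ v‖ * (1 + t) ^ k := mul_comm _ _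
  rw [hexp, Matrix.smul_mulVec, norm_smul]
  have habs : ‖Complex.exp ((t : ℂ) * μ)‖ = Real.exp (t * μ.re) := by
    rw [Complex.norm_exp]
    congr 1
    simp
  rw [habs, mul_comm]
  refine mul_le_mul hbound le_rfl (Real.exp_nonneg _) ?_
  positivity


lemma aux_vec_decay {n : ℕ} (B : Matrix (Fin n) (Fin n) ℂ)
    (hB : ∀ μ ∈ spectrum ℂ B, μ.re < 0) (v : Fin n → ℂ) :
    ∃ C α : ℝ, 0 < C ∧ 0 < α ∧ ∀ t : ℝ, 0 ≤ t →
      ‖exp (t • B) *ᵥ v‖ ≤ C * Real.exp (-(α * t)) := by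
  set f : Module.End ℂ (Fin n → ℂ) := Matrix.toLinAlgEquiv' B with hf
  have htop : v ∈ ⨆ μ : ℂ, f.maxGenEigenspace μ := by
    rw [Module.End.iSup_maxGenEigenspace_eq_top]; trivial
  refine Submodule.iSup_induction (motive := fun x => ∃ C α : ℝ, 0 < C ∧ 0 < α ∧ ∀ t : ℝ, 0 ≤ t →
      ‖exp (t • B) *ᵥ x‖ ≤ C * Real.exp (-(α * t))) _ htop ?_ ?_ ?_
  · -- generalized eigenvector case
    intro μ x hx
    rcases eq_or_ne x 0 with rfl | hx0
    · exact ⟨1, 1, one_pos, one_pos, fun t ht => by simp [Real.exp_nonneg]⟩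
    have hnz : n ≠ 0 := by
      rintro rfl
      exact hx0 (Subsingleton.elim _ _)
    -- μ is an eigenvalue hence in the spectrum
    have hμspec : μ ∈ spectrum ℂ B := by
      have hbot : f.maxGenEigenspace μ ≠ ⊥ := by
        intro h
        rw [h, Submodule.mem_bot] at hx
        exact hx0 hx
      rw [Module.End.maxGenEigenspace_eq_genEigenspace_finrank] at hbot
      have hge : f.HasGenEigenvalue μ (Module.finrank ℂ (Fin n → ℂ)) := by
        rwa [Module.End.hasGenEigenvalue_iff]
      have hfr : 0 < Module.finrank ℂ (Fin n → ℂ) := by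
        rw [Module.finrank_pi]
        simpa [Fintype.card_fin] using Nat.pos_of_ne_zero hnz
      have hev : f.HasEigenvalue μ :=
        (Module.End.hasGenEigenvalue_iff_hasEigenvalue hfr).mp hge
      have := Module.End.hasEigenvalue_iff_mem_spectrum.mp hev
      rwa [hf, AlgEquiv.spectrum_eq Matrix.toLinAlgEquiv' B] at this
    have hμ : μ.re < 0 := hB μ hμspec
    -- nilpotency at the matrix level
    obtain ⟨k, hk⟩ := (Module.End.mem_maxGenEigenspace f μ x).mp hx
    have hkmat : ((B - μ • 1) ^ k) *ᵥ x = 0 := by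
      have : (f - μ • 1) ^ k = Matrix.toLinAlgEquiv' ((B - μ • 1) ^ k) := by
        rw [map_pow, map_sub, _root_.map_smul, _root_.map_one]
      rw [this] at hk
      rwa [Matrix.toLinAlgEquiv'_apply] at hk
    set K := ∑ j ∈ range k, ‖((B - μ • 1) ^ j) *ᵥ x‖ with hK
    have hKnn : 0 ≤ K := Finset.sum_nonneg fun j _ => norm_nonneg _
    set β := -μ.re with hβ
    have hβpos : 0 < β := by simp [hβ]; linarith
    refine ⟨(K * ((Nat.factorial k : ℝ) * (2 / β) ^ k * Real.exp (β / 2))) + 1, β / 2,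
      by positivity, by positivity, fun t ht => ?_⟩
    have h1 := aux_nilp_decay B μ x k hkmat t ht
    have hpoly : (1 + t) ^ k ≤ (Nat.factorial k : ℝ) * (2 / β) ^ k * Real.exp (β / 2) *
        Real.exp (β / 2 * t) := by
      have hx0' : (0:ℝ) ≤ β / 2 * (1 + t) := by positivity
      have h2 := Real.pow_div_factorial_le_exp (β / 2 * (1 + t)) hx0' k
      rw [div_le_iff₀ (by positivity : (0:ℝ) < (Nat.factorial k : ℝ))] at h2
      rw [mul_pow] at h2
      have h4 : (1 + t) ^ k = (2 / β) ^ k * ((β / 2) ^ k * (1 + t) ^ k) := by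
        rw [← mul_assoc, ← mul_pow]
        field_simp
        simp
      rw [h4]
      calc (2 / β) ^ k * ((β / 2) ^ k * (1 + t) ^ k)
          ≤ (2 / β) ^ k * (Real.exp (β / 2 * (1 + t)) * (Nat.factorial k : ℝ)) := by
            exact mul_le_mul_of_nonneg_left h2 (by positivity)
        _ = (Nat.factorial k : ℝ) * (2 / β) ^ k * Real.exp (β / 2) * Real.exp (β / 2 * t) := by
            rw [mul_add, Real.exp_add]
            ring
    have hexpre : Real.exp (t * μ.re) = Real.exp (-(β * t)) := by
      congr 1
      simp [hβ]
      ring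
    calc ‖exp (t • B) *ᵥ x‖ ≤ K * (1 + t) ^ k * Real.exp (t * μ.re) := h1
      _ ≤ K * ((Nat.factorial k : ℝ) * (2 / β) ^ k * Real.exp (β / 2) * Real.exp (β / 2 * t)) *
          Real.exp (-(β * t)) := by
          rw [hexpre]
          exact mul_le_mul_of_nonneg_right
            (mul_le_mul_of_nonneg_left hpoly hKnn) (Real.exp_nonneg _)
      _ = K * ((Nat.factorial k : ℝ) * (2 / β) ^ k * Real.exp (β / 2)) *
          (Real.exp (β / 2 * t) * Real.exp (-(β * t))) := by ring
      _ ≤ (K * ((Nat.factorial k : ℝ) * (2 / β) ^ k * Real.exp (β / 2))) * Real.exp (-(β / 2 * t)) := by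
          rw [← Real.exp_add]
          refine mul_le_mul_of_nonneg_left ?_ (by positivity)
          exact Real.exp_le_exp.mpr (by linarith)
      _ ≤ (K * ((Nat.factorial k : ℝ) * (2 / β) ^ k * Real.exp (β / 2)) + 1) *
          Real.exp (-(β / 2 * t)) := by
          exact mul_le_mul_of_nonneg_right (by linarith) (Real.exp_nonneg _)
  · exact ⟨1, 1, one_pos, one_pos, fun t ht => by simp [Real.exp_nonneg]⟩
  · rintro x y ⟨C₁, α₁, hC₁, hα₁, h₁⟩ ⟨C₂, α₂, hC₂, hα₂, h₂⟩
    refine ⟨C₁ + C₂, min α₁ α₂, by positivity, lt_min hα₁ hα₂, fun t ht => ?_⟩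
    have e1 : Real.exp (-(α₁ * t)) ≤ Real.exp (-(min α₁ α₂ * t)) :=
      Real.exp_le_exp.mpr (by nlinarith [min_le_left α₁ α₂])
    have e2 : Real.exp (-(α₂ * t)) ≤ Real.exp (-(min α₁ α₂ * t)) :=
      Real.exp_le_exp.mpr (by nlinarith [min_le_right α₁ α₂])
    calc ‖exp (t • B) *ᵥ (x + y)‖ = ‖exp (t • B) *ᵥ x + exp (t • B) *ᵥ y‖ := by
          rw [Matrix.mulVec_add]
      _ ≤ ‖exp (t • B) *ᵥ x‖ + ‖exp (t • B) *ᵥ y‖ := norm_add_le _ _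
      _ ≤ C₁ * Real.exp (-(α₁ * t)) + C₂ * Real.exp (-(α₂ * t)) := add_le_add (h₁ t ht) (h₂ t ht)
      _ ≤ C₁ * Real.exp (-(min α₁ α₂ * t)) + C₂ * Real.exp (-(min α₁ α₂ * t)) :=
          add_le_add (mul_le_mul_of_nonneg_left e1 hC₁.le) (mul_le_mul_of_nonneg_left e2 hC₂.le)
      _ = (C₁ + C₂) * Real.exp (-(min α₁ α₂ * t)) := by ring



lemma aux_entry_decay {n : ℕ} (A : Matrix (Fin n) (Fin n) ℝ) (hA : IsHurwitz A) :
    ∃ C α : ℝ, 0 < C ∧ 0 < α ∧ ∀ t : ℝ, 0 ≤ t → ∀ i j,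
      |(exp (t • A)) i j| ≤ C * Real.exp (-(α * t)) := by
  rcases Nat.eq_zero_or_pos n with rfl | hn
  · exact ⟨1, 1, one_pos, one_pos, fun t ht i j => i.elim0⟩
  set B := A.map (algebraMap ℝ ℂ) with hB
  have hmap : ∀ t : ℝ, (exp (t • A)).map (algebraMap ℝ ℂ) = exp (t • B) := by
    intro t
    have h1 : (RingHom.mapMatrix (algebraMap ℝ ℂ) : Matrix (Fin n) (Fin n) ℝ →+* Matrix (Fin n) (Fin n) ℂ)
        (exp (t • A)) = exp ((t • A).map (algebraMap ℝ ℂ)) :=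
      map_exp _ (Continuous.matrix_map continuous_id (continuous_algebraMap ℝ ℂ)) _
    have h2 : (t • A).map (algebraMap ℝ ℂ) = t • B := by
      ext i j
      simp [hB, Matrix.map_apply, Complex.real_smul]
    have h3 : (exp : Matrix (Fin n) (Fin n) ℂ → Matrix (Fin n) (Fin n) ℂ) = exp :=
      rfl
    calc (exp (t • A)).map (algebraMap ℝ ℂ) = exp ((t • A).map (algebraMap ℝ ℂ)) := h1
      _ = exp (t • B) := by rw [h2, h3]
  choose C α hC hα h using fun j : Fin n => aux_vec_decay B hA (Pi.single j 1)
  have hne : (Finset.univ : Finset (Fin n)).Nonempty := ⟨⟨0, hn⟩, Finset.mem_univ _⟩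
  have hsum : 0 ≤ ∑ j, C j := Finset.sum_nonneg fun j _ => (hC j).le
  refine ⟨(∑ j, C j) + 1, Finset.univ.inf' hne α, by linarith,
    (Finset.lt_inf'_iff hne).mpr fun j _ => hα j, fun t ht i j => ?_⟩
  have e1 : (exp (t • A)) i j = ((exp (t • B)) i j).re := by
    rw [← hmap t]; simp [Matrix.map_apply]
  have e2 : |(exp (t • A)) i j| ≤ ‖(exp (t • B)) i j‖ := by
    rw [e1]
    exact (Complex.abs_re_le_norm _)
  have e3 : (exp (t • B)) i j = (exp (t • B) *ᵥ Pi.single j 1) i := by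
    rw [Matrix.mulVec_single]
    simp
  have e4 : ‖(exp (t • B) *ᵥ Pi.single j 1) i‖ ≤ ‖exp (t • B) *ᵥ Pi.single j 1‖ :=
    norm_le_pi_norm _ i
  have e5 := h j t ht
  have e6 : C j * Real.exp (-(α j * t)) ≤ ((∑ j, C j) + 1) * Real.exp (-(Finset.univ.inf' hne α * t)) := by
    have h6 : C j ≤ (∑ j, C j) + 1 := by
      have := Finset.single_le_sum (f := C) (fun j _ => (hC j).le) (Finset.mem_univ j)
      linarith
    have h7 : Real.exp (-(α j * t)) ≤ Real.exp (-(Finset.univ.inf' hne α * t)) :=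
      Real.exp_le_exp.mpr (by nlinarith [Finset.inf'_le α (Finset.mem_univ j)])
    exact mul_le_mul h6 h7 (Real.exp_nonneg _) (by linarith)
  calc |(exp (t • A)) i j| ≤ ‖(exp (t • B)) i j‖ := e2
    _ ≤ ‖exp (t • B) *ᵥ Pi.single j 1‖ := by rw [e3]; exact e4
    _ ≤ C j * Real.exp (-(α j * t)) := e5
    _ ≤ _ := e6



lemma aux_hurwitz_transpose {n : ℕ} {A : Matrix (Fin n) (Fin n) ℝ} (hA : IsHurwitz A) :
    IsHurwitz Aᵀ := by
  intro μ hμ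
  apply hA μ
  rw [spectrum.mem_iff] at hμ ⊢
  intro hc
  apply hμ
  have he : algebraMap ℂ (Matrix (Fin n) (Fin n) ℂ) μ - Aᵀ.map (algebraMap ℝ ℂ)
      = (algebraMap ℂ (Matrix (Fin n) (Fin n) ℂ) μ - A.map (algebraMap ℝ ℂ))ᵀ := by
    rw [Matrix.transpose_sub, Matrix.transpose_map]
    congr 1
    rw [Algebra.algebraMap_eq_smul_one, Matrix.transpose_smul, Matrix.transpose_one]
  rw [he, Matrix.isUnit_iff_isUnit_det, Matrix.det_transpose, ← Matrix.isUnit_iff_isUnit_det]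
  exact hc

noncomputable def auxGram {n m : ℕ} (A : Matrix (Fin n) (Fin n) ℝ)
    (Bm : Matrix (Fin n) (Fin m) ℝ) : Matrix (Fin n) (Fin n) ℝ :=
  Matrix.of fun i j => ∫ t in Set.Ioi (0:ℝ), (exp (t • A) * Bm * Bmᵀ * exp (t • Aᵀ)) i j

section GramLemmas
variable {n m : ℕ} (A : Matrix (Fin n) (Fin n) ℝ) (Bm : Matrix (Fin n) (Fin m) ℝ)

lemma aux_cont_exp : Continuous fun t : ℝ => exp (t • A) :=
  exp_continuous.comp (continuous_id.smul continuous_const)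

lemma aux_cont (i j : Fin n) :
    Continuous fun t : ℝ => (exp (t • A) * Bm * Bmᵀ * exp (t • Aᵀ)) i j := by
  have h1 : Continuous fun t : ℝ => exp (t • A) * Bm :=
    (aux_cont_exp A).matrix_mul continuous_const
  have h2 : Continuous fun t : ℝ => exp (t • A) * Bm * Bmᵀ :=
    h1.matrix_mul continuous_const
  have h3 : Continuous fun t : ℝ => exp (t • A) * Bm * Bmᵀ * exp (t • Aᵀ) :=
    h2.matrix_mul (aux_cont_exp Aᵀ)
  exact (continuous_apply j).comp ((continuous_apply i).comp h3)

lemma aux_entry_prod_bound {P Q : Matrix (Fin n) (Fin n) ℝ} {M : Matrix (Fin n) (Fin n) ℝ}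
    {c d : ℝ} (hP : ∀ i j, |P i j| ≤ c) (hQ : ∀ i j, |Q i j| ≤ d) (i j : Fin n) :
    |(P * M * Q) i j| ≤ c * d * ∑ k, ∑ l, |M k l| := by
  have hc : 0 ≤ c := le_trans (abs_nonneg _) (hP i i)
  have hd : 0 ≤ d := le_trans (abs_nonneg _) (hQ i i)
  have he : (P * M * Q) i j = ∑ l, ∑ k, P i k * M k l * Q l j := by
    simp only [Matrix.mul_apply, Finset.sum_mul]
  rw [he]
  calc |∑ l, ∑ k, P i k * M k l * Q l j| ≤ ∑ l, ∑ k, |P i k * M k l * Q l j| := by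
        refine (Finset.abs_sum_le_sum_abs _ _).trans (Finset.sum_le_sum fun l _ =>
          Finset.abs_sum_le_sum_abs _ _)
    _ ≤ ∑ l, ∑ k, c * d * |M k l| := by
        refine Finset.sum_le_sum fun l _ => Finset.sum_le_sum fun k _ => ?_
        rw [abs_mul, abs_mul]
        calc |P i k| * |M k l| * |Q l j| ≤ c * |M k l| * d := by
              refine mul_le_mul (mul_le_mul_of_nonneg_right (hP i k) (abs_nonneg _)) (hQ l j)
                (abs_nonneg _) (by positivity)
          _ = c * d * |M k l| := by ring
    _ = c * d * ∑ l, ∑ k, |M k l| := by simp [Finset.mul_sum]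
    _ = c * d * ∑ k, ∑ l, |M k l| := by rw [Finset.sum_comm]

lemma aux_integrable (hA : IsHurwitz A) (i j : Fin n) :
    IntegrableOn (fun t : ℝ => (exp (t • A) * Bm * Bmᵀ * exp (t • Aᵀ)) i j)
      (Set.Ioi (0:ℝ)) := by
  obtain ⟨C, α, hC, hα, h1⟩ := aux_entry_decay A hA
  obtain ⟨C', α', hC', hα', h2⟩ := aux_entry_decay Aᵀ (aux_hurwitz_transpose hA)
  set K := ∑ k, ∑ l, |(Bm * Bmᵀ) k l| with hK
  have hKnn : 0 ≤ K := Finset.sum_nonneg fun k _ => Finset.sum_nonneg fun l _ => abs_nonneg _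
  refine Integrable.mono' (g := fun t => C * C' * K * Real.exp (-(α + α') * t))
    ?_ ((aux_cont A Bm i j).aestronglyMeasurable) ?_
  · exact (exp_neg_integrableOn_Ioi 0 (by linarith : (0:ℝ) < α + α')).const_mul (C * C' * K)
  · rw [ae_restrict_iff' measurableSet_Ioi]
    refine ae_of_all _ fun t ht => ?_
    have ht' : (0:ℝ) ≤ t := le_of_lt ht
    rw [Real.norm_eq_abs]
    have hb : |(exp (t • A) * (Bm * Bmᵀ) * exp (t • Aᵀ)) i j| ≤
        (C * Real.exp (-(α * t))) * (C' * Real.exp (-(α' * t))) * K :=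
      aux_entry_prod_bound (fun i j => h1 t ht' i j) (fun i j => h2 t ht' i j) i j
    have he : exp (t • A) * Bm * Bmᵀ * exp (t • Aᵀ)
        = exp (t • A) * (Bm * Bmᵀ) * exp (t • Aᵀ) := by
      rw [Matrix.mul_assoc (exp (t • A)) Bm Bmᵀ]
    rw [he]
    refine hb.trans (le_of_eq ?_)
    show _ = C * C' * K * Real.exp (-(α + α') * t)
    rw [show -(α + α') * t = -(α * t) + -(α' * t) by ring, Real.exp_add]
    ring

lemma aux_exp_transpose (t : ℝ) : exp (t • Aᵀ) = (exp (t • A))ᵀ := by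
  rw [← Matrix.transpose_smul, Matrix.exp_transpose]

lemma aux_gram_hermitian : (auxGram A Bm).IsHermitian := by
  refine Matrix.IsHermitian.ext fun i j => ?_
  simp only [RCLike.star_def, starRingEnd_apply, star_trivial]
  show auxGram A Bm j i = auxGram A Bm i j
  unfold auxGram
  simp only [Matrix.of_apply]
  congr 1
  funext t
  have h : (exp (t • A) * Bm * Bmᵀ * exp (t • Aᵀ))ᵀ
      = exp (t • A) * Bm * Bmᵀ * exp (t • Aᵀ) := by
    rw [Matrix.transpose_mul, Matrix.transpose_mul, Matrix.transpose_mul,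
      Matrix.transpose_transpose, aux_exp_transpose, Matrix.transpose_transpose,
      ← aux_exp_transpose]
    simp [Matrix.mul_assoc]
  conv_lhs => rw [← h]
  rfl

lemma aux_gram_form (hA : IsHurwitz A) (x : Fin n → ℝ) :
    x ⬝ᵥ (auxGram A Bm *ᵥ x) = ∫ t in Set.Ioi (0:ℝ),
      ((Bmᵀ * exp (t • Aᵀ)) *ᵥ x) ⬝ᵥ ((Bmᵀ * exp (t • Aᵀ)) *ᵥ x) := by
  have hint : ∀ i j : Fin n, IntegrableOn
      (fun t : ℝ => x i * ((exp (t • A) * Bm * Bmᵀ * exp (t • Aᵀ)) i j * x j))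
      (Set.Ioi (0:ℝ)) := by
    intro i j
    have := ((aux_integrable A Bm hA i j).mul_const (x j)).const_mul (x i)
    simpa [mul_assoc, IntegrableOn] using this
  have lhs_eq : x ⬝ᵥ (auxGram A Bm *ᵥ x)
      = ∑ i, ∑ j, ∫ t in Set.Ioi (0:ℝ),
          x i * ((exp (t • A) * Bm * Bmᵀ * exp (t • Aᵀ)) i j * x j) := by
    simp only [dotProduct, Matrix.mulVec, auxGram, Matrix.of_apply]
    refine Finset.sum_congr rfl fun i _ => ?_
    rw [Finset.mul_sum]
    refine Finset.sum_congr rfl fun j _ => ?_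
    rw [← MeasureTheory.integral_mul_const, ← MeasureTheory.integral_const_mul]
  rw [lhs_eq]
  have step1 : ∀ i : Fin n, ∑ j, ∫ t in Set.Ioi (0:ℝ),
      x i * ((exp (t • A) * Bm * Bmᵀ * exp (t • Aᵀ)) i j * x j)
      = ∫ t in Set.Ioi (0:ℝ), ∑ j, x i * ((exp (t • A) * Bm * Bmᵀ * exp (t • Aᵀ)) i j * x j) :=
    fun i => (MeasureTheory.integral_finset_sum _ (fun j _ => hint i j)).symm
  simp only [step1]
  rw [← MeasureTheory.integral_finset_sum _ (fun i _ =>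
    MeasureTheory.integrable_finset_sum _ (fun j _ => hint i j))]
  · congr 1
    funext t
    have hform : ∑ i, ∑ j, x i * ((exp (t • A) * Bm * Bmᵀ * exp (t • Aᵀ)) i j * x j)
        = x ⬝ᵥ ((exp (t • A) * Bm * Bmᵀ * exp (t • Aᵀ)) *ᵥ x) := by
      simp only [dotProduct, Matrix.mulVec, Finset.mul_sum]
    rw [hform]
    set R := exp (t • A) * Bm with hR
    have hsplit : exp (t • A) * Bm * Bmᵀ * exp (t • Aᵀ) = R * Rᵀ := by
      rw [hR, Matrix.transpose_mul, aux_exp_transpose, Matrix.mul_assoc]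
    have hRT : Bmᵀ * exp (t • Aᵀ) = Rᵀ := by
      rw [hR, Matrix.transpose_mul, aux_exp_transpose]
    rw [hsplit, hRT]
    rw [← Matrix.mulVec_mulVec, Matrix.dotProduct_mulVec, ← Matrix.mulVec_transpose]

lemma aux_pointwise (x : Fin n → ℝ) (t : ℝ) :
    ∑ i, ∑ j, x i * ((exp (t • A) * Bm * Bmᵀ * exp (t • Aᵀ)) i j * x j)
      = ((Bmᵀ * exp (t • Aᵀ)) *ᵥ x) ⬝ᵥ ((Bmᵀ * exp (t • Aᵀ)) *ᵥ x) := by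
  have hform : ∑ i, ∑ j, x i * ((exp (t • A) * Bm * Bmᵀ * exp (t • Aᵀ)) i j * x j)
      = x ⬝ᵥ ((exp (t • A) * Bm * Bmᵀ * exp (t • Aᵀ)) *ᵥ x) := by
    simp only [dotProduct, Matrix.mulVec, Finset.mul_sum]
  rw [hform]
  set R := exp (t • A) * Bm with hR
  have hsplit : exp (t • A) * Bm * Bmᵀ * exp (t • Aᵀ) = R * Rᵀ := by
    rw [hR, Matrix.transpose_mul, aux_exp_transpose, Matrix.mul_assoc]
  have hRT : Bmᵀ * exp (t • Aᵀ) = Rᵀ := by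
    rw [hR, Matrix.transpose_mul, aux_exp_transpose]
  rw [hsplit, hRT]
  rw [← Matrix.mulVec_mulVec, Matrix.dotProduct_mulVec, ← Matrix.mulVec_transpose]

lemma aux_form_integrable (hA : IsHurwitz A) (x : Fin n → ℝ) :
    IntegrableOn (fun t : ℝ =>
      ((Bmᵀ * exp (t • Aᵀ)) *ᵥ x) ⬝ᵥ ((Bmᵀ * exp (t • Aᵀ)) *ᵥ x)) (Set.Ioi (0:ℝ)) := by
  have hint : ∀ i j : Fin n, IntegrableOn
      (fun t : ℝ => x i * ((exp (t • A) * Bm * Bmᵀ * exp (t • Aᵀ)) i j * x j))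
      (Set.Ioi (0:ℝ)) := by
    intro i j
    have := ((aux_integrable A Bm hA i j).mul_const (x j)).const_mul (x i)
    simpa [mul_assoc, IntegrableOn] using this
  have h2 := MeasureTheory.integrable_finset_sum (μ := volume.restrict (Set.Ioi (0:ℝ)))
    Finset.univ (fun i (_ : i ∈ Finset.univ) =>
      MeasureTheory.integrable_finset_sum Finset.univ (fun j _ => hint i j))
  exact h2.congr (ae_of_all _ fun t => aux_pointwise A Bm x t)

lemma aux_gram_posdef (hA : IsHurwitz A)
    (hobs : ∀ x : Fin n → ℝ, (∀ k : ℕ, (Bmᵀ * (Aᵀ) ^ k) *ᵥ x = 0) → x = 0) :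
    (auxGram A Bm).PosDef := by
  refine Matrix.PosDef.of_dotProduct_mulVec_pos (aux_gram_hermitian A Bm) fun x hx => ?_
  simp only [star_trivial]
  rw [aux_gram_form A Bm hA x]
  set y : ℝ → (Fin m → ℝ) := fun t => (Bmᵀ * exp (t • Aᵀ)) *ᵥ x with hy
  have hφnn : ∀ t : ℝ, 0 ≤ y t ⬝ᵥ y t :=
    fun t => Finset.sum_nonneg fun k _ => mul_self_nonneg _
  have hycont : Continuous fun t : ℝ => y t :=
    (continuous_const.matrix_mul (aux_cont_exp Aᵀ)).matrix_mulVec continuous_const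
  have hφcont : Continuous fun t : ℝ => y t ⬝ᵥ y t := hycont.dotProduct hycont
  -- there is a positive time where y is nonzero
  have hex : ∃ t0 : ℝ, 0 < t0 ∧ y t0 ≠ 0 := by
    by_contra hcon
    push_neg at hcon
    refine hx (hobs x fun k => ?_)
    have key : ∀ k : ℕ, ∀ t : ℝ, 0 < t → (Bmᵀ * (Aᵀ) ^ k * exp (t • Aᵀ)) *ᵥ x = 0 := by
      intro k
      induction k with
      | zero =>
        intro t ht
        simpa [Matrix.mul_one] using hcon t ht
      | succ k IH =>
        intro t ht
        let L0 : Matrix (Fin n) (Fin n) ℝ →ₗ[ℝ] (Fin m → ℝ) :=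
          { toFun := fun M => (Bmᵀ * (Aᵀ) ^ k * M) *ᵥ x
            map_add' := fun M₁ M₂ => by
              simp only [Matrix.mul_add, Matrix.add_mulVec]
            map_smul' := fun c M => by
              simp only [Matrix.mul_smul, Matrix.smul_mulVec, RingHom.id_apply] }
        let L : Matrix (Fin n) (Fin n) ℝ →L[ℝ] (Fin m → ℝ) := L0.toContinuousLinearMap
        have hd : HasDerivAt (fun s : ℝ => exp (s • Aᵀ)) (exp (t • Aᵀ) * Aᵀ) t :=
          hasDerivAt_exp_smul_const Aᵀ t
        have hd2 : HasDerivAt (fun s : ℝ => L (exp (s • Aᵀ))) (L (exp (t • Aᵀ) * Aᵀ)) t :=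
          L.hasFDerivAt.comp_hasDerivAt t hd
        have hzero : (fun s : ℝ => L (exp (s • Aᵀ))) =ᶠ[nhds t] (fun _ => (0 : Fin m → ℝ)) := by
          filter_upwards [IsOpen.mem_nhds isOpen_Ioi ht] with s hs
          exact IH s hs
        have hd3 : HasDerivAt (fun _ : ℝ => (0 : Fin m → ℝ)) (L (exp (t • Aᵀ) * Aᵀ)) t :=
          HasDerivAt.congr_of_eventuallyEq hd2 hzero.symm
        have hzero' : L (exp (t • Aᵀ) * Aᵀ) = 0 := hd3.unique (hasDerivAt_const t 0)
        have hc : exp (t • Aᵀ) * Aᵀ = Aᵀ * exp (t • Aᵀ) :=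
          (((Commute.refl Aᵀ).smul_left t).exp_left).eq
        have : (Bmᵀ * (Aᵀ) ^ k * (exp (t • Aᵀ) * Aᵀ)) *ᵥ x = 0 := hzero'
        rw [hc] at this
        calc (Bmᵀ * (Aᵀ) ^ (k + 1) * exp (t • Aᵀ)) *ᵥ x
            = (Bmᵀ * (Aᵀ) ^ k * (Aᵀ * exp (t • Aᵀ))) *ᵥ x := by
              rw [pow_succ]
              congr 1
              rw [Matrix.mul_assoc, Matrix.mul_assoc, Matrix.mul_assoc]
          _ = 0 := this
    -- take the limit t → 0⁺
    have hcontk : Continuous fun t : ℝ => (Bmᵀ * (Aᵀ) ^ k * exp (t • Aᵀ)) *ᵥ x :=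
      (continuous_const.matrix_mul (aux_cont_exp Aᵀ)).matrix_mulVec continuous_const
    have h1 : Filter.Tendsto (fun t : ℝ => (Bmᵀ * (Aᵀ) ^ k * exp (t • Aᵀ)) *ᵥ x)
        (nhdsWithin 0 (Set.Ioi 0)) (nhds ((Bmᵀ * (Aᵀ) ^ k * exp ((0:ℝ) • Aᵀ)) *ᵥ x)) :=
      (hcontk.tendsto 0).mono_left nhdsWithin_le_nhds
    have heq : (fun _ : ℝ => (0 : Fin m → ℝ)) =ᶠ[nhdsWithin 0 (Set.Ioi 0)]
        (fun t : ℝ => (Bmᵀ * (Aᵀ) ^ k * exp (t • Aᵀ)) *ᵥ x) :=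
      Filter.eventuallyEq_of_mem self_mem_nhdsWithin (fun s hs => (key k s hs).symm)
    have h2 : Filter.Tendsto (fun t : ℝ => (Bmᵀ * (Aᵀ) ^ k * exp (t • Aᵀ)) *ᵥ x)
        (nhdsWithin 0 (Set.Ioi 0)) (nhds 0) :=
      Filter.Tendsto.congr' heq tendsto_const_nhds
    have h0 : (Bmᵀ * (Aᵀ) ^ k * exp ((0:ℝ) • Aᵀ)) *ᵥ x = 0 := tendsto_nhds_unique h1 h2
    rwa [zero_smul, exp_zero, Matrix.mul_one] at h0
  obtain ⟨t0, ht0, hy0⟩ := hex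
  refine (MeasureTheory.setIntegral_pos_iff_support_of_nonneg_ae
    (ae_of_all _ fun t => hφnn t) (aux_form_integrable A Bm hA x)).mpr ?_
  have hUopen : IsOpen ({t : ℝ | 0 < y t ⬝ᵥ y t} ∩ Set.Ioi 0) :=
    (isOpen_lt continuous_const hφcont).inter isOpen_Ioi
  have ht0mem : t0 ∈ {t : ℝ | 0 < y t ⬝ᵥ y t} ∩ Set.Ioi 0 := by
    constructor
    · obtain ⟨k0, hk0⟩ := Function.ne_iff.mp hy0
      show (0:ℝ) < y t0 ⬝ᵥ y t0
      simp only [dotProduct]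
      exact Finset.sum_pos' (fun k _ => mul_self_nonneg _)
        ⟨k0, Finset.mem_univ k0, mul_self_pos.mpr hk0⟩
    · exact ht0
  calc (0:ENNReal) < volume ({t : ℝ | 0 < y t ⬝ᵥ y t} ∩ Set.Ioi 0) :=
        hUopen.measure_pos volume ⟨t0, ht0mem⟩
    _ ≤ volume (Function.support (fun t : ℝ => y t ⬝ᵥ y t) ∩ Set.Ioi 0) := by
        refine measure_mono (Set.inter_subset_inter_left _ ?_)
        intro t htm
        exact ne_of_gt htm

end GramLemmas

lemma aux_balance {n : ℕ} (Wc Wo : Matrix (Fin n) (Fin n) ℝ)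
    (hc : Wc.PosDef) (ho : Wo.PosDef) :
    ∃ T : Matrix (Fin n) (Fin n) ℝ, IsUnit T.det ∧
      ∃ σ : Fin n → ℝ, Antitone σ ∧ (∀ i, 0 < σ i) ∧
        T * Wc * Tᵀ = Matrix.diagonal σ ∧
        (T⁻¹)ᵀ * Wo * T⁻¹ = Matrix.diagonal σ := by
  classical
  -- the square root of Wc
  open scoped MatrixOrder in
  have hWc0 : 0 ≤ Wc := hc.posSemidef.nonneg
  open scoped MatrixOrder in
  set R := CFC.sqrt Wc with hRdef
  open scoped MatrixOrder in
  have hRR : R * R = Wc := CFC.sqrt_mul_sqrt_self Wc hWc0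
  open scoped MatrixOrder in
  have hRherm : R.IsHermitian := (CFC.sqrt_nonneg Wc).posSemidef.1
  have hRsymm : Rᵀ = R := by
    rw [← Matrix.conjTranspose_eq_transpose_of_trivial]
    exact hRherm
  have hRdet : IsUnit R.det := by
    have hdet : R.det * R.det = Wc.det := by rw [← Matrix.det_mul, hRR]
    have : Wc.det ≠ 0 := ne_of_gt hc.det_pos
    refine isUnit_iff_ne_zero.mpr fun h0 => this ?_
    rw [← hdet, h0, mul_zero]
  -- M = R * Wo * R is positive definite
  set M := R * Wo * R with hMdef
  have hWo : Woᵀ = Wo := by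
    rw [← Matrix.conjTranspose_eq_transpose_of_trivial]
    exact ho.1
  have hMherm : M.IsHermitian := by
    show Mᴴ = M
    rw [Matrix.conjTranspose_eq_transpose_of_trivial, hMdef, Matrix.transpose_mul,
      Matrix.transpose_mul, hRsymm, hWo, Matrix.mul_assoc]
  have hMpd : M.PosDef := by
    refine Matrix.PosDef.of_dotProduct_mulVec_pos hMherm fun x hx => ?_
    have hRx : R *ᵥ x ≠ 0 := by
      intro h0
      apply hx
      have : x = (R⁻¹ * R) *ᵥ x := by rw [Matrix.nonsing_inv_mul _ hRdet, Matrix.one_mulVec]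
      rw [← Matrix.mulVec_mulVec, h0, Matrix.mulVec_zero] at this
      exact this
    have hform : star x ⬝ᵥ (M *ᵥ x) = star (R *ᵥ x) ⬝ᵥ (Wo *ᵥ (R *ᵥ x)) := by
      simp only [star_trivial, hMdef]
      rw [← Matrix.mulVec_mulVec, ← Matrix.mulVec_mulVec, Matrix.dotProduct_mulVec,
        ← Matrix.mulVec_transpose, hRsymm]
    rw [hform]
    exact ho.dotProduct_mulVec_pos hRx
  -- spectral decomposition of M
  set d0 := hMherm.eigenvalues with hd0
  set U : Matrix (Fin n) (Fin n) ℝ := (hMherm.eigenvectorUnitary : Matrix (Fin n) (Fin n) ℝ)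
    with hU
  have hspec : M = U * Matrix.diagonal d0 * Uᵀ := by
    have h := hMherm.spectral_theorem
    have h1 : (RCLike.ofReal ∘ d0 : Fin n → ℝ) = d0 := funext fun i => rfl
    have h2 : (star U : Matrix (Fin n) (Fin n) ℝ) = Uᵀ := by
      rw [Matrix.star_eq_conjTranspose, Matrix.conjTranspose_eq_transpose_of_trivial]
    rw [Unitary.conjStarAlgAut_apply] at h
    rw [h1, h2] at h
    exact h
  have hU1 : Uᵀ * U = 1 := by
    have := Matrix.mem_unitaryGroup_iff'.mp hMherm.eigenvectorUnitary.2
    rwa [Matrix.star_eq_conjTranspose, Matrix.conjTranspose_eq_transpose_of_trivial] at this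
  have hU2 : U * Uᵀ = 1 := by
    have := Matrix.mem_unitaryGroup_iff.mp hMherm.eigenvectorUnitary.2
    rwa [Matrix.star_eq_conjTranspose, Matrix.conjTranspose_eq_transpose_of_trivial] at this
  -- sort eigenvalues in decreasing order
  set e : Equiv.Perm (Fin n) := Fin.revPerm.trans (Tuple.sort d0) with he
  set d : Fin n → ℝ := d0 ∘ e with hd
  have hd_anti : Antitone d := by
    intro i j hij
    have hmono := Tuple.monotone_sort d0
    have : (d0 ∘ Tuple.sort d0) (Fin.rev j) ≤ (d0 ∘ Tuple.sort d0) (Fin.rev i) :=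
      hmono (Fin.rev_le_rev.mpr hij)
    simpa [hd, he, Equiv.trans_apply, Fin.revPerm_apply] using this
  have hd_pos : ∀ i, 0 < d i := fun i => hMpd.eigenvalues_pos _
  set V : Matrix (Fin n) (Fin n) ℝ := U.submatrix id e with hV
  have hVt : Vᵀ = Uᵀ.submatrix (⇑e) id := by rw [hV, Matrix.transpose_submatrix]
  have hVtV : Vᵀ * V = 1 := by
    rw [hVt, hV]
    have : (Uᵀ.submatrix (⇑e) (⇑(Equiv.refl (Fin n)))) * (U.submatrix (⇑(Equiv.refl (Fin n))) (⇑e))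
        = (Uᵀ * U).submatrix (⇑e) (⇑e) := Matrix.submatrix_mul_equiv Uᵀ U _ _ _
    simpa [hU1, Matrix.submatrix_one_equiv] using this
  have hVVt : V * Vᵀ = 1 := by
    rw [hVt, hV]
    have : (U.submatrix id (⇑e)) * (Uᵀ.submatrix (⇑e) id) = (U * Uᵀ).submatrix id id :=
      Matrix.submatrix_mul_equiv U Uᵀ _ _ _
    simpa [hU2] using this
  have hMV : M = V * Matrix.diagonal d * Vᵀ := by
    rw [hV, hVt, hd]
    rw [← Matrix.submatrix_diagonal_equiv]
    have h1 : (U.submatrix id (⇑e)) * ((Matrix.diagonal d0).submatrix (⇑e) (⇑e))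
        = (U * Matrix.diagonal d0).submatrix id (⇑e) := Matrix.submatrix_mul_equiv _ _ _ _ _
    rw [h1]
    have h2 : ((U * Matrix.diagonal d0).submatrix id (⇑e)) * (Uᵀ.submatrix (⇑e) id)
        = (U * Matrix.diagonal d0 * Uᵀ).submatrix id id := Matrix.submatrix_mul_equiv _ _ _ _ _
    rw [h2, Matrix.submatrix_id_id, hspec]
  -- build the balancing transformation
  set q : Fin n → ℝ := fun i => Real.sqrt (Real.sqrt (d i)) with hqdef
  set σ : Fin n → ℝ := fun i => Real.sqrt (d i) with hσdef
  have hσ_pos : ∀ i, 0 < σ i := fun i => Real.sqrt_pos.mpr (hd_pos i)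
  have hq_pos : ∀ i, 0 < q i := fun i => Real.sqrt_pos.mpr (hσ_pos i)
  have hq2 : ∀ i, q i * q i = σ i := fun i => Real.mul_self_sqrt (Real.sqrt_nonneg _)
  have hσ2 : ∀ i, σ i * σ i = d i := fun i => Real.mul_self_sqrt (hd_pos i).le
  set Dq : Matrix (Fin n) (Fin n) ℝ := Matrix.diagonal q with hDq
  set Dq' : Matrix (Fin n) (Fin n) ℝ := Matrix.diagonal (fun i => (q i)⁻¹) with hDq'
  set T : Matrix (Fin n) (Fin n) ℝ := Dq * Vᵀ * R⁻¹ with hT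
  set Tinv : Matrix (Fin n) (Fin n) ℝ := R * V * Dq' with hTinv
  have hVcan : ∀ Z : Matrix (Fin n) (Fin n) ℝ, Vᵀ * (V * Z) = Z := fun Z => by
    rw [← Matrix.mul_assoc, hVtV, Matrix.one_mul]
  have hVcan' : ∀ Z : Matrix (Fin n) (Fin n) ℝ, V * (Vᵀ * Z) = Z := fun Z => by
    rw [← Matrix.mul_assoc, hVVt, Matrix.one_mul]
  have hTT : T * Tinv = 1 := by
    rw [hT, hTinv]
    simp only [Matrix.mul_assoc]
    rw [Matrix.nonsing_inv_mul_cancel_left _ _ hRdet, hVcan, hDq, hDq',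
      Matrix.diagonal_mul_diagonal]
    rw [show (fun i => q i * (q i)⁻¹) = fun _ => (1:ℝ) from
      funext fun i => mul_inv_cancel₀ (hq_pos i).ne', Matrix.diagonal_one]
  refine ⟨T, Matrix.isUnit_det_of_right_inverse hTT, σ,
    fun i j hij => Real.sqrt_le_sqrt (hd_anti hij), hσ_pos, ?_, ?_⟩
  · -- T * Wc * Tᵀ = diagonal σ
    have hTt : Tᵀ = R⁻¹ * (V * Dq) := by
      rw [hT, Matrix.transpose_mul, Matrix.transpose_mul, Matrix.transpose_nonsing_inv, hRsymm,
        Matrix.transpose_transpose, hDq, Matrix.diagonal_transpose]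
    rw [hTt, hT, ← hRR]
    simp only [Matrix.mul_assoc]
    rw [Matrix.nonsing_inv_mul_cancel_left _ _ hRdet, Matrix.mul_nonsing_inv_cancel_left _ _ hRdet,
      hVcan, hDq, Matrix.diagonal_mul_diagonal]
    rw [show (fun i => q i * q i) = σ from funext hq2]
  · -- (T⁻¹)ᵀ * Wo * T⁻¹ = diagonal σ
    have hTinveq : T⁻¹ = Tinv := Matrix.inv_eq_right_inv hTT
    rw [hTinveq, hTinv]
    have hTit : (R * V * Dq')ᵀ = Dq' * (Vᵀ * R) := by
      rw [Matrix.transpose_mul, Matrix.transpose_mul, hRsymm, hDq',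
        Matrix.diagonal_transpose]
    rw [hTit]
    simp only [Matrix.mul_assoc]
    have hMz : ∀ Z : Matrix (Fin n) (Fin n) ℝ, R * (Wo * (R * Z)) = M * Z := fun Z => by
      simp only [hMdef, Matrix.mul_assoc]
    rw [hMz, hMV]
    simp only [Matrix.mul_assoc]
    rw [hVcan, hVcan, hDq', Matrix.diagonal_mul_diagonal, Matrix.diagonal_mul_diagonal]
    rw [show (fun i => (q i)⁻¹ * (d i * (q i)⁻¹)) = σ from funext fun i => by
      rw [← hσ2 i, ← hq2 i]; field_simp]

end AuxProofs

/-- Existence of a balancing transformation: for a Hurwitz `F` with `(F, G)` controllable and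
`(F, H)` observable, there is an invertible `T` and `σ₁ ≥ … ≥ σₙ > 0` with
`T W_c Tᵀ = T⁻ᵀ W_o T⁻¹ = diag(σ₁, …, σₙ)`. -/
theorem exists_balancing_transformation {n m p : ℕ}
    (F : Matrix (Fin n) (Fin n) ℝ) (G : Matrix (Fin n) (Fin m) ℝ) (H : Matrix (Fin p) (Fin n) ℝ)
    (hF : IsHurwitz F) (hFG : IsControllablePair F G) (hFH : IsObservablePair F H) :
    ∃ T : Matrix (Fin n) (Fin n) ℝ, IsUnit T.det ∧
      ∃ σ : Fin n → ℝ, Antitone σ ∧ (∀ i, 0 < σ i) ∧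
        T * controllabilityGramian F G * Tᵀ = Matrix.diagonal σ ∧
        (T⁻¹)ᵀ * observabilityGramian F H * T⁻¹ = Matrix.diagonal σ := by
  have hWc : (controllabilityGramian F G).PosDef := by
    have h : controllabilityGramian F G = auxGram F G := rfl
    rw [h]
    refine aux_gram_posdef F G hF ?_
    intro x hxk
    have hvm : x ᵥ* ctrbMatrix F G = 0 := by
      funext p
      have h1 : (Gᵀ * (Fᵀ) ^ (p.1 : ℕ)) *ᵥ x = 0 := hxk (p.1 : ℕ)
      rw [← Matrix.transpose_pow, ← Matrix.transpose_mul, Matrix.mulVec_transpose] at h1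
      have := congrFun h1 p.2
      simpa [ctrbMatrix, Matrix.vecMul, dotProduct] using this
    have hker : (ctrbMatrix F G)ᵀ *ᵥ x = 0 := by
      rw [Matrix.mulVec_transpose]; exact hvm
    have hrank : ((ctrbMatrix F G)ᵀ).rank = n := by
      rw [Matrix.rank_transpose]; exact hFG
    have hkermem : x ∈ LinearMap.ker ((ctrbMatrix F G)ᵀ).mulVecLin := by
      rw [LinearMap.mem_ker, Matrix.mulVecLin_apply]; exact hker
    have hrn := LinearMap.finrank_range_add_finrank_ker ((ctrbMatrix F G)ᵀ).mulVecLin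
    have hfr : Module.finrank ℝ (Fin n → ℝ) = n := by
      simp [Module.finrank_pi]
    rw [hfr] at hrn
    have hrange : Module.finrank ℝ (LinearMap.range ((ctrbMatrix F G)ᵀ).mulVecLin) = n := hrank
    have hker0 : Module.finrank ℝ (LinearMap.ker ((ctrbMatrix F G)ᵀ).mulVecLin) = 0 := by
      omega
    have := Submodule.finrank_eq_zero.mp hker0
    rw [this, Submodule.mem_bot] at hkermem
    exact hkermem
  have hWo : (observabilityGramian F H).PosDef := by
    have h : observabilityGramian F H = auxGram Fᵀ Hᵀ := by
      unfold observabilityGramian auxGram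
      simp only [Matrix.transpose_transpose]
    rw [h]
    refine aux_gram_posdef Fᵀ Hᵀ (aux_hurwitz_transpose hF) ?_
    intro x hxk
    refine hFH x fun k _ => ?_
    have := hxk k
    simpa [Matrix.transpose_transpose] using this
  have h1 : controllabilityGramian F G = auxGram F G := rfl
  have h2 : observabilityGramian F H = auxGram Fᵀ Hᵀ := by
    unfold observabilityGramian auxGram
    simp only [Matrix.transpose_transpose]
  exact aux_balance _ _ hWc hWo
end
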